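/- The space L_σ := {Y ∈ L⁰ : ‖Y‖_σ < ∞} with norm ‖Y‖_σ := ∫₀¹ σ(u) F_{|Y|}^{-1}(u) du is a Banach space: every Cauchy sequence for ‖·‖_σ converges in L_σ. -/

import Mathlib

open MeasureTheory ENNReal

/-- The (left-continuous) quantile function of X: F_X^{-1}(p) = inf{y : P(X ≤ y) ≥ p}. -/
noncomputable def quantile {Ω : Type*} [MeasurableSpace Ω] (μ : Measure Ω)
    (X : Ω → ℝ) (p : ℝ) : ℝ :=
  sInf {y : ℝ | p ≤ (μ {ω | X ω ≤ y}).toReal}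

/-- The σ-norm ‖Y‖_σ = ∫₀¹ σ(u)·F_{|Y|}^{-1}(u) du, valued in [0,∞]. -/
noncomputable def sigmaNorm {Ω : Type*} [MeasurableSpace Ω] (μ : Measure Ω)
    (σ : ℝ → ℝ) (Y : Ω → ℝ) : ℝ≥0∞ :=
  ∫⁻ u in Set.Ioo (0 : ℝ) 1, ENNReal.ofReal (σ u * quantile μ (fun ω => |Y ω|) u)

/-- The Average Value-at-Risk at level α. -/
noncomputable def avar {Ω : Type*} [MeasurableSpace Ω] (μ : Measure Ω)
    (X : Ω → ℝ) (α : ℝ) : ℝ :=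
  (1 - α)⁻¹ * ∫ u in α..1, quantile μ X u

open Filter Set Topology

section QuantileFacts

variable {Ω : Type*} [MeasurableSpace Ω] {μ : Measure Ω} [IsProbabilityMeasure μ]
  {W : Ω → ℝ}

lemma cdf_mono (μ : Measure Ω) [IsProbabilityMeasure μ] (W : Ω → ℝ) :
    Monotone fun t => (μ {ω | W ω ≤ t}).toReal := fun s t hst =>
  ENNReal.toReal_mono (measure_ne_top μ _)
    (measure_mono fun ω (hω : W ω ≤ s) => hω.trans hst)

lemma cdf_right (hW : Measurable W) {u t : ℝ}
    (h : ∀ s, t < s → u ≤ (μ {ω | W ω ≤ s}).toReal) :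
    u ≤ (μ {ω | W ω ≤ t}).toReal := by
  have hanti : Antitone fun n : ℕ => {ω | W ω ≤ t + (n + 1 : ℝ)⁻¹} := by
    intro m n hmn ω hω
    simp only [Set.mem_setOf_eq] at *
    have h1 : (n + 1 : ℝ)⁻¹ ≤ (m + 1 : ℝ)⁻¹ := by
      apply inv_anti₀ (by positivity)
      exact_mod_cast Nat.add_le_add_right hmn 1
    linarith
  have hiInter : ⋂ n : ℕ, {ω | W ω ≤ t + (n + 1 : ℝ)⁻¹} = {ω | W ω ≤ t} := by
    ext ω
    simp only [Set.mem_iInter, Set.mem_setOf_eq]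
    constructor
    · intro h'
      by_contra hc
      push_neg at hc
      obtain ⟨n, hn⟩ := exists_nat_one_div_lt (sub_pos.mpr hc)
      have h2 := h' n
      rw [one_div] at hn
      linarith
    · intro h' n
      have : (0 : ℝ) < (n + 1 : ℝ)⁻¹ := by positivity
      linarith
  have htendsto : Tendsto (fun n : ℕ => μ {ω | W ω ≤ t + (n + 1 : ℝ)⁻¹}) atTop
      (𝓝 (μ {ω | W ω ≤ t})) := by
    rw [← hiInter]
    exact tendsto_measure_iInter_atTop
      (fun n => (measurableSet_le hW measurable_const).nullMeasurableSet) hanti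
      ⟨0, measure_ne_top μ _⟩
  have h2 : Tendsto (fun n : ℕ => (μ {ω | W ω ≤ t + (n + 1 : ℝ)⁻¹}).toReal) atTop
      (𝓝 ((μ {ω | W ω ≤ t}).toReal)) :=
    (ENNReal.tendsto_toReal (measure_ne_top μ _)).comp htendsto
  refine ge_of_tendsto h2 (Eventually.of_forall fun n => h _ ?_)
  have : (0 : ℝ) < (n + 1 : ℝ)⁻¹ := by positivity
  linarith

lemma qSet_nonneg (hW0 : ∀ ω, 0 ≤ W ω) {u : ℝ} (hu : 0 < u) :
    ∀ y ∈ {y : ℝ | u ≤ (μ {ω | W ω ≤ y}).toReal}, 0 ≤ y := by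
  intro y hy
  simp only [Set.mem_setOf_eq] at hy
  have hpos : μ {ω | W ω ≤ y} ≠ 0 := by
    intro h0
    rw [h0] at hy
    simp at hy
    linarith
  obtain ⟨ω, hω⟩ := nonempty_of_measure_ne_zero hpos
  exact le_trans (hW0 ω) hω

lemma qSet_nonempty {u : ℝ} (hu : u < 1) :
    ∃ y : ℝ, u ≤ (μ {ω | W ω ≤ y}).toReal := by
  have hmono : Monotone fun n : ℕ => {ω | W ω ≤ (n : ℝ)} := by
    intro m n hmn ω hω
    simp only [Set.mem_setOf_eq] at *
    exact le_trans hω (by exact_mod_cast hmn)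
  have hUnion : ⋃ n : ℕ, {ω | W ω ≤ (n : ℝ)} = Set.univ := by
    ext ω
    simp only [Set.mem_iUnion, Set.mem_setOf_eq, Set.mem_univ, iff_true]
    obtain ⟨n, hn⟩ := exists_nat_ge (W ω)
    exact ⟨n, hn⟩
  have htendsto : Tendsto (fun n : ℕ => (μ {ω | W ω ≤ (n : ℝ)}).toReal) atTop
      (𝓝 (1 : ℝ)) := by
    have h1 : Tendsto (fun n : ℕ => μ {ω | W ω ≤ (n : ℝ)}) atTop (𝓝 (μ Set.univ)) := by
      have := tendsto_measure_iUnion_atTop (μ := μ) hmono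
      rwa [hUnion] at this
    rw [measure_univ] at h1
    have := (ENNReal.tendsto_toReal (by norm_num : (1 : ℝ≥0∞) ≠ ⊤)).comp h1
    simpa [Function.comp_def] using this
  have := htendsto.eventually_const_le (show u < 1 by exact hu)
  obtain ⟨n, hn⟩ := this.exists
  exact ⟨n, hn⟩

lemma quantile_nonneg (hW0 : ∀ ω, 0 ≤ W ω) {u : ℝ} (hu : 0 < u) :
    0 ≤ quantile μ W u :=
  Real.sInf_nonneg (qSet_nonneg hW0 hu)

lemma quantile_le_iff (hW : Measurable W) (hW0 : ∀ ω, 0 ≤ W ω) {u t : ℝ}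
    (hu : u ∈ Set.Ioo (0 : ℝ) 1) :
    quantile μ W u ≤ t ↔ u ≤ (μ {ω | W ω ≤ t}).toReal := by
  constructor
  · intro h
    apply cdf_right hW
    intro s hs
    have hne : {y : ℝ | u ≤ (μ {ω | W ω ≤ y}).toReal}.Nonempty := qSet_nonempty hu.2
    have hbdd : BddBelow {y : ℝ | u ≤ (μ {ω | W ω ≤ y}).toReal} :=
      ⟨0, fun y hy => qSet_nonneg hW0 hu.1 y hy⟩
    have : sInf {y : ℝ | u ≤ (μ {ω | W ω ≤ y}).toReal} < s := lt_of_le_of_lt h hs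
    obtain ⟨y, hy, hys⟩ := (csInf_lt_iff hbdd hne).mp this
    exact le_trans hy (cdf_mono μ W hys.le)
  · intro h
    exact csInf_le ⟨0, fun y hy => qSet_nonneg hW0 hu.1 y hy⟩ h

lemma lt_quantile_iff_tail (hW : Measurable W) (hW0 : ∀ ω, 0 ≤ W ω) {u t : ℝ}
    (hu : u ∈ Set.Ioo (0 : ℝ) 1) :
    t < quantile μ W u ↔ ENNReal.ofReal (1 - u) < μ {ω | t < W ω} := by
  have hcompl : {ω | t < W ω} = {ω | W ω ≤ t}ᶜ := by
    ext ω; simp [not_le]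
  have hsum : (μ {ω | W ω ≤ t}).toReal + (μ {ω | t < W ω}).toReal = 1 := by
    rw [hcompl, ← ENNReal.toReal_add (measure_ne_top μ _) (measure_ne_top μ _),
      measure_add_measure_compl (measurableSet_le hW measurable_const)]
    simp
  rw [← not_le, quantile_le_iff hW hW0 hu, not_le]
  rw [ENNReal.ofReal_lt_iff_lt_toReal (by linarith [hu.2]) (measure_ne_top μ _)]
  constructor <;> intro h <;> linarith

lemma quantile_mem_qSet (hW : Measurable W) (hW0 : ∀ ω, 0 ≤ W ω) {u : ℝ}
    (hu : u ∈ Set.Ioo (0 : ℝ) 1) :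
    u ≤ (μ {ω | W ω ≤ quantile μ W u}).toReal :=
  (quantile_le_iff hW hW0 hu).mp le_rfl

lemma quantile_monotoneOn (hW : Measurable W) (hW0 : ∀ ω, 0 ≤ W ω) :
    MonotoneOn (quantile μ W) (Set.Ioo (0 : ℝ) 1) := by
  intro u hu v hv huv
  apply csInf_le_csInf ⟨0, fun y hy => qSet_nonneg hW0 hu.1 y hy⟩ (qSet_nonempty hv.2)
  intro y hy
  exact le_trans huv hy

lemma ofReal_quantile_eq (hW : Measurable W) (hW0 : ∀ ω, 0 ≤ W ω) {u : ℝ}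
    (hu : u ∈ Set.Ioo (0 : ℝ) 1) :
    ENNReal.ofReal (quantile μ W u) =
      ∫⁻ t in Set.Ioi (0 : ℝ),
        Set.indicator {t : ℝ | ENNReal.ofReal (1 - u) < μ {ω | t < W ω}}
          (fun _ => (1 : ℝ≥0∞)) t := by
  have htail_anti : Antitone fun t : ℝ => μ {ω | t < W ω} := fun s t hst =>
    measure_mono fun ω (hω : t < W ω) => lt_of_le_of_lt hst hω
  have hAmeas : MeasurableSet {t : ℝ | ENNReal.ofReal (1 - u) < μ {ω | t < W ω}} := by
    have : Measurable fun t : ℝ => μ {ω | t < W ω} := htail_anti.measurable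
    exact this measurableSet_Ioi
  rw [lintegral_indicator hAmeas, setLIntegral_one, Measure.restrict_apply hAmeas]
  have hset : {t : ℝ | ENNReal.ofReal (1 - u) < μ {ω | t < W ω}} ∩ Set.Ioi 0 =
      Set.Ioo 0 (quantile μ W u) := by
    ext t
    simp only [Set.mem_inter_iff, Set.mem_setOf_eq, Set.mem_Ioi, Set.mem_Ioo]
    rw [← lt_quantile_iff_tail hW hW0 hu]
    tauto
  rw [hset, Real.volume_Ioo, sub_zero]

end QuantileFacts

section QuantileFacts2

variable {Ω : Type*} [MeasurableSpace Ω] {μ : Measure Ω} [IsProbabilityMeasure μ]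

lemma quantile_add_le {A B : Ω → ℝ} (hA : Measurable A) (hB : Measurable B) {u : ℝ}
    (hu : u ∈ Set.Ioo (0 : ℝ) 1) :
    quantile μ (fun ω => |A ω + B ω|) u ≤
      quantile μ (fun ω => |A ω|) ((1 + u) / 2) +
        quantile μ (fun ω => |B ω|) ((1 + u) / 2) := by
  have hv : (1 + u) / 2 ∈ Set.Ioo (0 : ℝ) 1 := ⟨by linarith [hu.1], by linarith [hu.2]⟩
  set v := (1 + u) / 2 with hvdef
  set a := quantile μ (fun ω => |A ω|) v with ha
  set b := quantile μ (fun ω => |B ω|) v with hb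
  have hWX : Measurable fun ω => |A ω + B ω| := (hA.add hB).abs
  rw [quantile_le_iff hWX (fun ω => abs_nonneg _) hu]
  have h1 : v ≤ (μ {ω | |A ω| ≤ a}).toReal :=
    quantile_mem_qSet hA.abs (fun ω => abs_nonneg _) hv
  have h2 : v ≤ (μ {ω | |B ω| ≤ b}).toReal :=
    quantile_mem_qSet hB.abs (fun ω => abs_nonneg _) hv
  set s := {ω | |A ω| ≤ a} with hs
  set t := {ω | |B ω| ≤ b} with ht
  have hsub : s ∩ t ⊆ {ω | |A ω + B ω| ≤ a + b} := by
    rintro ω ⟨hs', ht'⟩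
    have hs'' : |A ω| ≤ a := hs'
    have ht'' : |B ω| ≤ b := ht'
    show |A ω + B ω| ≤ a + b
    exact le_trans (abs_add_le (A ω) (B ω)) (add_le_add hs'' ht'')
  have hkey : μ (s ∪ t) + μ (s ∩ t) = μ s + μ t :=
    measure_union_add_inter s (measurableSet_le hB.abs measurable_const)
  have hfin : ∀ X : Set Ω, μ X ≠ ⊤ := fun X => measure_ne_top μ X
  have hle1 : (μ (s ∪ t)).toReal ≤ 1 := by
    rw [show (1 : ℝ) = (μ Set.univ).toReal by simp]
    exact ENNReal.toReal_mono (hfin _) (measure_mono (Set.subset_univ _))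
  have h3 : (μ (s ∪ t)).toReal + (μ (s ∩ t)).toReal = (μ s).toReal + (μ t).toReal := by
    rw [← ENNReal.toReal_add (hfin _) (hfin _), ← ENNReal.toReal_add (hfin _) (hfin _), hkey]
  have h4 : u ≤ (μ (s ∩ t)).toReal := by
    have hveq : v + v - 1 = u := by rw [hvdef]; ring
    linarith
  exact le_trans h4 (ENNReal.toReal_mono (hfin _) (measure_mono hsub))

lemma tailSet_measurable (W : Ω → ℝ) (c : ℝ≥0∞) :
    MeasurableSet {t : ℝ | c < μ {ω | t < W ω}} := by
  have htail_anti : Antitone fun t : ℝ => μ {ω | t < W ω} := fun s t hst =>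
    measure_mono fun ω (hω : t < W ω) => lt_of_le_of_lt hst hω
  exact htail_anti.measurable measurableSet_Ioi

end QuantileFacts2

lemma ennreal_mul_liminf_le {c : ℝ≥0∞} {f : ℕ → ℝ≥0∞} :
    c * Filter.liminf f Filter.atTop ≤ Filter.liminf (fun k => c * f k) Filter.atTop := by
  rw [Filter.liminf_eq_iSup_iInf_of_nat, Filter.liminf_eq_iSup_iInf_of_nat, ENNReal.mul_iSup]
  apply iSup_mono
  intro n
  exact le_iInf₂ fun i hi => mul_le_mul_right (iInf₂_le i hi) c

section SigmaFacts

variable {Ω : Type*} [MeasurableSpace Ω] {μ : Measure Ω} [IsProbabilityMeasure μ]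
  {σ : ℝ → ℝ}

lemma sigmaNorm_rep (hσ0 : ∀ u ∈ Set.Icc (0 : ℝ) 1, 0 ≤ σ u) (X : Ω → ℝ) :
    sigmaNorm μ σ X = ∫⁻ u in Set.Ioo (0 : ℝ) 1,
      ENNReal.ofReal (σ u) * ENNReal.ofReal (quantile μ (fun ω => |X ω|) u) := by
  apply setLIntegral_congr_fun measurableSet_Ioo
  exact fun u hu => ENNReal.ofReal_mul (hσ0 u ⟨hu.1.le, hu.2.le⟩)

lemma sigmaNorm_fatou (hσ0 : ∀ u ∈ Set.Icc (0 : ℝ) 1, 0 ≤ σ u) (hσmeas : Measurable σ)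
    {X : Ω → ℝ} {Xk : ℕ → Ω → ℝ} (hX : Measurable X) (hXk : ∀ k, Measurable (Xk k))
    (hconv : ∀ᵐ ω ∂μ, Tendsto (fun k => Xk k ω) atTop (𝓝 (X ω))) :
    sigmaNorm μ σ X ≤ Filter.liminf (fun k => sigmaNorm μ σ (Xk k)) Filter.atTop := by
  have htail : ∀ t : ℝ, μ {ω | t < |X ω|} ≤
      Filter.liminf (fun k => μ {ω | t < |Xk k ω|}) Filter.atTop := by
    intro t
    have hmk : ∀ k, MeasurableSet {ω | t < |Xk k ω|} := fun k =>
      measurableSet_lt measurable_const (hXk k).abs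
    have hptwise : ∀ᵐ ω ∂μ, Set.indicator {ω | t < |X ω|} (fun _ => (1 : ℝ≥0∞)) ω ≤
        Filter.liminf
          (fun k => Set.indicator {ω' | t < |Xk k ω'|} (fun _ => (1 : ℝ≥0∞)) ω)
          Filter.atTop := by
      filter_upwards [hconv] with ω hω
      by_cases hmem : ω ∈ {ω' | t < |X ω'|}
      · have habs : Tendsto (fun k => |Xk k ω|) atTop (𝓝 (|X ω|)) := hω.abs
        have hev : ∀ᶠ k in Filter.atTop,
            (1 : ℝ≥0∞) ≤ Set.indicator {ω' | t < |Xk k ω'|} (fun _ => (1 : ℝ≥0∞)) ω := by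
          filter_upwards [habs.eventually (eventually_gt_nhds hmem)] with k hk
          have hk' : ω ∈ {ω' | t < |Xk k ω'|} := hk
          rw [Set.indicator_of_mem hk']
        rw [Set.indicator_of_mem hmem]
        exact Filter.le_liminf_of_le (by isBoundedDefault) hev
      · rw [Set.indicator_of_notMem hmem]
        exact zero_le
    calc μ {ω | t < |X ω|}
        = ∫⁻ ω, Set.indicator {ω' | t < |X ω'|} (fun _ => (1 : ℝ≥0∞)) ω ∂μ :=
          (lintegral_indicator_one (measurableSet_lt measurable_const hX.abs)).symm
      _ ≤ ∫⁻ ω, Filter.liminf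
            (fun k => Set.indicator {ω' | t < |Xk k ω'|} (fun _ => (1 : ℝ≥0∞)) ω)
            Filter.atTop ∂μ := lintegral_mono_ae hptwise
      _ ≤ Filter.liminf
            (fun k => ∫⁻ ω, Set.indicator {ω' | t < |Xk k ω'|} (fun _ => (1 : ℝ≥0∞)) ω ∂μ)
            Filter.atTop :=
          lintegral_liminf_le fun k => measurable_one.indicator (hmk k)
      _ = Filter.liminf (fun k => μ {ω | t < |Xk k ω|}) Filter.atTop := by
          congr 1
          funext k
          exact lintegral_indicator_one (hmk k)
  have hq : ∀ u ∈ Set.Ioo (0 : ℝ) 1,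
      ENNReal.ofReal (quantile μ (fun ω => |X ω|) u) ≤
        Filter.liminf (fun k => ENNReal.ofReal (quantile μ (fun ω => |Xk k ω|) u))
          Filter.atTop := by
    intro u hu
    rw [ofReal_quantile_eq hX.abs (fun ω => abs_nonneg _) hu]
    have hrw : (fun k => ENNReal.ofReal (quantile μ (fun ω => |Xk k ω|) u)) = fun k =>
        ∫⁻ t in Set.Ioi (0 : ℝ),
          Set.indicator {t' : ℝ | ENNReal.ofReal (1 - u) < μ {ω | t' < |Xk k ω|}}
            (fun _ => (1 : ℝ≥0∞)) t := by
      funext k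
      exact ofReal_quantile_eq (hXk k).abs (fun ω => abs_nonneg _) hu
    rw [hrw]
    calc ∫⁻ t in Set.Ioi (0 : ℝ),
          Set.indicator {t' : ℝ | ENNReal.ofReal (1 - u) < μ {ω | t' < |X ω|}}
            (fun _ => (1 : ℝ≥0∞)) t
        ≤ ∫⁻ t in Set.Ioi (0 : ℝ), Filter.liminf
            (fun k => Set.indicator {t' : ℝ | ENNReal.ofReal (1 - u) < μ {ω | t' < |Xk k ω|}}
              (fun _ => (1 : ℝ≥0∞)) t) Filter.atTop := by
          apply lintegral_mono
          intro t
          by_cases hmem : t ∈ {t' : ℝ | ENNReal.ofReal (1 - u) < μ {ω | t' < |X ω|}}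
          · have hev : ∀ᶠ k in Filter.atTop, (1 : ℝ≥0∞) ≤
                Set.indicator {t' : ℝ | ENNReal.ofReal (1 - u) < μ {ω | t' < |Xk k ω|}}
                  (fun _ => (1 : ℝ≥0∞)) t := by
              filter_upwards [Filter.eventually_lt_of_lt_liminf
                (lt_of_lt_of_le hmem (htail t))] with k hk
              have hk' : t ∈ {t' : ℝ | ENNReal.ofReal (1 - u) < μ {ω | t' < |Xk k ω|}} := hk
              rw [Set.indicator_of_mem hk']
            rw [Set.indicator_of_mem hmem]
            exact Filter.le_liminf_of_le (by isBoundedDefault) hev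
          · rw [Set.indicator_of_notMem hmem]
            exact zero_le
      _ ≤ Filter.liminf
            (fun k => ∫⁻ t in Set.Ioi (0 : ℝ),
              Set.indicator {t' : ℝ | ENNReal.ofReal (1 - u) < μ {ω | t' < |Xk k ω|}}
                (fun _ => (1 : ℝ≥0∞)) t) Filter.atTop :=
          lintegral_liminf_le fun k => measurable_one.indicator (tailSet_measurable _ _)
  rw [sigmaNorm_rep hσ0]
  have hrepk : (fun k => sigmaNorm μ σ (Xk k)) = fun k =>
      ∫⁻ u in Set.Ioo (0 : ℝ) 1,
        ENNReal.ofReal (σ u) * ENNReal.ofReal (quantile μ (fun ω => |Xk k ω|) u) := by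
    funext k
    exact sigmaNorm_rep hσ0 (Xk k)
  rw [hrepk]
  calc ∫⁻ u in Set.Ioo (0 : ℝ) 1,
        ENNReal.ofReal (σ u) * ENNReal.ofReal (quantile μ (fun ω => |X ω|) u)
      ≤ ∫⁻ u in Set.Ioo (0 : ℝ) 1, Filter.liminf
          (fun k => ENNReal.ofReal (σ u) * ENNReal.ofReal (quantile μ (fun ω => |Xk k ω|) u))
          Filter.atTop := by
        apply lintegral_mono_ae
        rw [MeasureTheory.ae_restrict_iff' measurableSet_Ioo]
        apply MeasureTheory.ae_of_all
        intro u hu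
        exact le_trans (mul_le_mul_right (hq u hu) _) ennreal_mul_liminf_le
    _ ≤ Filter.liminf
          (fun k => ∫⁻ u in Set.Ioo (0 : ℝ) 1,
            ENNReal.ofReal (σ u) * ENNReal.ofReal (quantile μ (fun ω => |Xk k ω|) u))
          Filter.atTop := by
        apply lintegral_liminf_le'
        intro k
        exact (hσmeas.ennreal_ofReal.aemeasurable).mul
          (ENNReal.measurable_ofReal.comp_aemeasurable
            (aemeasurable_restrict_of_monotoneOn measurableSet_Ioo
              (quantile_monotoneOn (hXk k).abs fun ω => abs_nonneg _)))

end SigmaFacts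
section SigmaFacts2

variable {Ω : Type*} [MeasurableSpace Ω] {μ : Measure Ω} [IsProbabilityMeasure μ]
  {σ : ℝ → ℝ}

lemma sigmaNorm_tail_bound (hσ0 : ∀ u ∈ Set.Icc (0 : ℝ) 1, 0 ≤ σ u)
    (hσmeas : Measurable σ) {X : Ω → ℝ} (hX : Measurable X)
    {t ε : ℝ} (ht : 0 < t) (hε : ε ∈ Set.Ioc (0 : ℝ) 1)
    (h : sigmaNorm μ σ X <
      ENNReal.ofReal t * ∫⁻ u in Set.Ioo (1 - ε) 1, ENNReal.ofReal (σ u)) :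
    μ {ω | t < |X ω|} < ENNReal.ofReal ε := by
  by_contra hge
  push_neg at hge
  apply not_le.mpr h
  have hsub : Set.Ioo (1 - ε) 1 ⊆ Set.Ioo 0 1 := fun u hu =>
    ⟨by linarith [hu.1, hε.2], hu.2⟩
  calc ENNReal.ofReal t * ∫⁻ u in Set.Ioo (1 - ε) 1, ENNReal.ofReal (σ u)
      = ∫⁻ u in Set.Ioo (1 - ε) 1, ENNReal.ofReal (σ u) * ENNReal.ofReal t := by
        rw [lintegral_mul_const _ hσmeas.ennreal_ofReal, mul_comm]
    _ ≤ ∫⁻ u in Set.Ioo (1 - ε) 1,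
          ENNReal.ofReal (σ u * quantile μ (fun ω => |X ω|) u) := by
        apply lintegral_mono_ae
        rw [MeasureTheory.ae_restrict_iff' measurableSet_Ioo]
        apply MeasureTheory.ae_of_all
        intro u hu
        have hu' : u ∈ Set.Ioo (0 : ℝ) 1 := hsub hu
        have hσu : 0 ≤ σ u := hσ0 u ⟨hu'.1.le, hu'.2.le⟩
        have hlt : ENNReal.ofReal (1 - u) < μ {ω | t < |X ω|} :=
          lt_of_lt_of_le ((ENNReal.ofReal_lt_ofReal_iff hε.1).mpr (by linarith [hu.1])) hge
        have hq : t < quantile μ (fun ω => |X ω|) u :=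
          (lt_quantile_iff_tail hX.abs (fun ω => abs_nonneg _) hu').mpr hlt
        rw [← ENNReal.ofReal_mul hσu]
        exact ENNReal.ofReal_le_ofReal (mul_le_mul_of_nonneg_left hq.le hσu)
    _ ≤ sigmaNorm μ σ X := lintegral_mono_set hsub

lemma sigma_int_pos (hσ0 : ∀ u ∈ Set.Icc (0 : ℝ) 1, 0 ≤ σ u)
    (hσm : MonotoneOn σ (Set.Icc (0 : ℝ) 1)) (hσmeas : Measurable σ)
    (hσ1 : (∫ u in (0 : ℝ)..1, σ u) = 1) {ε : ℝ} (hε : ε ∈ Set.Ioc (0 : ℝ) 1) :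
    0 < ∫⁻ u in Set.Ioo (1 - ε) 1, ENNReal.ofReal (σ u) := by
  rw [pos_iff_ne_zero]
  intro h0
  have hae : ∀ᵐ u : ℝ ∂volume, u ∈ Set.Ioo (1 - ε) 1 → ENNReal.ofReal (σ u) = 0 := by
    rw [← MeasureTheory.ae_restrict_iff' measurableSet_Ioo]
    exact (lintegral_eq_zero_iff hσmeas.ennreal_ofReal).mp h0
  set s := Set.Ioo (max (1 - ε) 0) 1 with hsdef
  have hs_pos : volume s ≠ 0 := by
    rw [hsdef, Real.volume_Ioo]
    refine (ENNReal.ofReal_pos.mpr ?_).ne'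
    have h1 : 1 - ε < 1 := by linarith [hε.1]
    have h2 : (0 : ℝ) < 1 := one_pos
    have := max_lt h1 h2
    linarith
  have hE : volume {u : ℝ | ¬(u ∈ Set.Ioo (1 - ε) 1 → ENNReal.ofReal (σ u) = 0)} = 0 :=
    hae
  have hdiff : volume (s \ {u : ℝ | ¬(u ∈ Set.Ioo (1 - ε) 1 → ENNReal.ofReal (σ u) = 0)}) ≠ 0 := by
    rw [measure_diff_null hE]
    exact hs_pos
  obtain ⟨b, hbs, hbE⟩ := nonempty_of_measure_ne_zero hdiff
  have hbIoo : b ∈ Set.Ioo (1 - ε) 1 := ⟨lt_of_le_of_lt (le_max_left _ _) hbs.1, hbs.2⟩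
  have hbIcc : b ∈ Set.Icc (0 : ℝ) 1 := ⟨(le_max_right _ _).trans hbs.1.le, hbs.2.le⟩
  have hb0 : σ b = 0 := by
    have hP : b ∈ Set.Ioo (1 - ε) 1 → ENNReal.ofReal (σ b) = 0 := not_not.mp hbE
    have h1 : σ b ≤ 0 := ENNReal.ofReal_eq_zero.mp (hP hbIoo)
    linarith [hσ0 b hbIcc]
  have hzero : (fun u => σ u) =ᵐ[volume.restrict (Set.Ioc (0 : ℝ) 1)] 0 := by
    rw [Filter.EventuallyEq, MeasureTheory.ae_restrict_iff' measurableSet_Ioc]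
    have h2 : ∀ᵐ u : ℝ ∂volume, u ≠ 1 := by
      rw [MeasureTheory.ae_iff]
      have : {u : ℝ | ¬u ≠ 1} = {1} := by ext u; simp
      rw [this]
      exact measure_singleton 1
    filter_upwards [hae, h2] with u hu1 hu2 hu
    have huIcc : u ∈ Set.Icc (0 : ℝ) 1 := ⟨hu.1.le, hu.2⟩
    have hu0 : 0 ≤ σ u := hσ0 u huIcc
    by_cases hub : u ≤ b
    · have : σ u ≤ σ b := hσm huIcc hbIcc hub
      simp only [Pi.zero_apply]
      linarith
    · push_neg at hub
      have huIoo : u ∈ Set.Ioo (1 - ε) 1 :=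
        ⟨lt_trans hbIoo.1 hub, lt_of_le_of_ne hu.2 hu2⟩
      have h1 : σ u ≤ 0 := ENNReal.ofReal_eq_zero.mp (hu1 huIoo)
      simp only [Pi.zero_apply]
      linarith
  have hzero' : (∫ u in (0 : ℝ)..1, σ u) = 0 := by
    rw [intervalIntegral.integral_of_le zero_le_one]
    exact MeasureTheory.integral_eq_zero_of_ae hzero
  rw [hzero'] at hσ1
  norm_num at hσ1

lemma sigmaNorm_congr_abs {X X' : Ω → ℝ} (h : ∀ ω, |X ω| = |X' ω|) (σ : ℝ → ℝ) :
    sigmaNorm μ σ X = sigmaNorm μ σ X' := by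
  have hfun : (fun ω => |X ω|) = fun ω => |X' ω| := funext h
  simp only [sigmaNorm, hfun]

lemma sigmaNorm_add_le (hσ0 : ∀ u ∈ Set.Icc (0 : ℝ) 1, 0 ≤ σ u)
    (hσm : MonotoneOn σ (Set.Icc (0 : ℝ) 1)) (hσmeas : Measurable σ)
    {A B : Ω → ℝ} (hA : Measurable A) (hB : Measurable B) :
    sigmaNorm μ σ (fun ω => A ω + B ω) ≤ 2 * (sigmaNorm μ σ A + sigmaNorm μ σ B) := by
  set qA := fun w => quantile μ (fun ω => |A ω|) w with hqA
  set qB := fun w => quantile μ (fun ω => |B ω|) w with hqB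
  set h : ℝ → ℝ≥0∞ := fun w => ENNReal.ofReal (σ w * (qA w + qB w)) with hh
  have haA : AEMeasurable qA (volume.restrict (Set.Ioo (0 : ℝ) 1)) :=
    aemeasurable_restrict_of_monotoneOn measurableSet_Ioo
      (quantile_monotoneOn hA.abs fun ω => abs_nonneg _)
  have haB : AEMeasurable qB (volume.restrict (Set.Ioo (0 : ℝ) 1)) :=
    aemeasurable_restrict_of_monotoneOn measurableSet_Ioo
      (quantile_monotoneOn hB.abs fun ω => abs_nonneg _)
  have hah : AEMeasurable h (volume.restrict (Set.Ioo (0 : ℝ) 1)) :=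
    ENNReal.measurable_ofReal.comp_aemeasurable
      (hσmeas.aemeasurable.mul (haA.add haB))
  have step1 : sigmaNorm μ σ (fun ω => A ω + B ω) ≤
      ∫⁻ u in Set.Ioo (0 : ℝ) 1, h ((1 + u) / 2) := by
    simp only [sigmaNorm]
    apply lintegral_mono_ae
    rw [MeasureTheory.ae_restrict_iff' measurableSet_Ioo]
    apply MeasureTheory.ae_of_all
    intro u hu
    have hv : (1 + u) / 2 ∈ Set.Ioo (0 : ℝ) 1 := ⟨by linarith [hu.1], by linarith [hu.2]⟩
    apply ENNReal.ofReal_le_ofReal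
    have hqadd := quantile_add_le (μ := μ) hA hB hu
    have hσle : σ u ≤ σ ((1 + u) / 2) :=
      hσm ⟨hu.1.le, hu.2.le⟩ ⟨hv.1.le, hv.2.le⟩ (by linarith [hu.2])
    have hq0 : 0 ≤ quantile μ (fun ω => |A ω + B ω|) u :=
      quantile_nonneg (fun ω => abs_nonneg _) hu.1
    exact mul_le_mul hσle hqadd hq0 (hσ0 _ ⟨hv.1.le, hv.2.le⟩)
  set k := (Set.Ioo (2⁻¹ : ℝ) 1).indicator h with hkdef
  have hsub : Set.Ioo (2⁻¹ : ℝ) 1 ⊆ Set.Ioo (0 : ℝ) 1 := fun w hw =>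
    ⟨by linarith [hw.1], hw.2⟩
  have hk_meas : AEMeasurable k volume := by
    rw [aemeasurable_indicator_iff measurableSet_Ioo]
    exact hah.mono_measure (Measure.restrict_mono hsub le_rfl)
  have step2 : ∫⁻ u in Set.Ioo (0 : ℝ) 1, h ((1 + u) / 2) =
      ∫⁻ u : ℝ, k (2⁻¹ * u + 2⁻¹) := by
    rw [← lintegral_indicator measurableSet_Ioo]
    congr 1
    funext u
    by_cases hu : u ∈ Set.Ioo (0 : ℝ) 1
    · rw [Set.indicator_of_mem hu]
      have heq : (1 + u) / 2 = 2⁻¹ * u + 2⁻¹ := by ring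
      rw [heq, hkdef, Set.indicator_of_mem
        (show 2⁻¹ * u + 2⁻¹ ∈ Set.Ioo (2⁻¹ : ℝ) 1 from
          ⟨by linarith [hu.1], by linarith [hu.2]⟩)]
    · rw [Set.indicator_of_notMem hu, hkdef, Set.indicator_of_notMem]
      intro hmem
      exact hu ⟨by linarith [hmem.1], by linarith [hmem.2]⟩
  have hmap : volume.map (fun u : ℝ => 2⁻¹ * u + 2⁻¹) = ENNReal.ofReal 2 • volume := by
    have hcomp : (fun u : ℝ => 2⁻¹ * u + 2⁻¹) =
        (fun x : ℝ => x + 2⁻¹) ∘ (fun u : ℝ => 2⁻¹ * u) := rfl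
    rw [hcomp, ← Measure.map_map (measurable_add_const _) (measurable_const_mul _),
      Real.map_volume_mul_left (by norm_num : (2⁻¹ : ℝ) ≠ 0), Measure.map_smul,
      map_add_right_eq_self volume (2⁻¹ : ℝ)]
    norm_num
  have step3 : ∫⁻ u : ℝ, k (2⁻¹ * u + 2⁻¹) = ENNReal.ofReal 2 * ∫⁻ w, k w := by
    have hk_meas' : AEMeasurable k (volume.map (fun u : ℝ => 2⁻¹ * u + 2⁻¹)) := by
      rw [hmap]
      exact hk_meas.smul_measure _
    rw [← lintegral_map' hk_meas' ((measurable_const_mul _).add_const _).aemeasurable,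
      hmap, lintegral_smul_measure, smul_eq_mul]
  have step4 : ∫⁻ w, k w ≤ sigmaNorm μ σ A + sigmaNorm μ σ B := by
    rw [hkdef, lintegral_indicator measurableSet_Ioo]
    calc ∫⁻ w in Set.Ioo (2⁻¹ : ℝ) 1, h w
        ≤ ∫⁻ w in Set.Ioo (0 : ℝ) 1, h w := lintegral_mono_set hsub
      _ = ∫⁻ w in Set.Ioo (0 : ℝ) 1,
            (ENNReal.ofReal (σ w * qA w) + ENNReal.ofReal (σ w * qB w)) := by
          apply setLIntegral_congr_fun measurableSet_Ioo
          intro w hw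
          have hσw : 0 ≤ σ w := hσ0 w ⟨hw.1.le, hw.2.le⟩
          have hqA0 : 0 ≤ qA w := quantile_nonneg (fun ω => abs_nonneg _) hw.1
          have hqB0 : 0 ≤ qB w := quantile_nonneg (fun ω => abs_nonneg _) hw.1
          rw [hh]
          simp only []
          rw [mul_add, ENNReal.ofReal_add (by positivity) (by positivity)]
      _ = sigmaNorm μ σ A + sigmaNorm μ σ B := by
          have hm1 : AEMeasurable (fun w => ENNReal.ofReal (σ w * qA w))
              (volume.restrict (Set.Ioo (0 : ℝ) 1)) :=
            ENNReal.measurable_ofReal.comp_aemeasurable (hσmeas.aemeasurable.mul haA)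
          rw [lintegral_add_left' hm1]
          rfl
  calc sigmaNorm μ σ (fun ω => A ω + B ω)
      ≤ ∫⁻ u in Set.Ioo (0 : ℝ) 1, h ((1 + u) / 2) := step1
    _ = ENNReal.ofReal 2 * ∫⁻ w, k w := by rw [step2, step3]
    _ ≤ ENNReal.ofReal 2 * (sigmaNorm μ σ A + sigmaNorm μ σ B) :=
        mul_le_mul_right step4 _
    _ = 2 * (sigmaNorm μ σ A + sigmaNorm μ σ B) := by norm_num

end SigmaFacts2

/-- (L_σ, ‖·‖_σ) is complete: every Cauchy sequence for ‖·‖_σ converges to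
an element of L_σ in the ‖·‖_σ norm. -/
theorem stmt15 {Ω : Type*} [MeasurableSpace Ω] (μ : Measure Ω) [IsProbabilityMeasure μ]
    [NullSingletonClass μ]
    (σ : ℝ → ℝ) (hσ0 : ∀ u ∈ Set.Icc (0 : ℝ) 1, 0 ≤ σ u)
    (hσm : MonotoneOn σ (Set.Icc (0 : ℝ) 1)) (hσmeas : Measurable σ)
    (hσ1 : (∫ u in (0 : ℝ)..1, σ u) = 1)
    (Y : ℕ → Ω → ℝ) (hYm : ∀ n, Measurable (Y n))
    (hYfin : ∀ n, sigmaNorm μ σ (Y n) < ⊤)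
    (hcauchy : ∀ ε : ℝ≥0∞, 0 < ε → ∃ N : ℕ, ∀ m ≥ N, ∀ n ≥ N,
      sigmaNorm μ σ (fun ω => Y m ω - Y n ω) < ε) :
    ∃ Z : Ω → ℝ, Measurable Z ∧ sigmaNorm μ σ Z < ⊤ ∧
      Filter.Tendsto (fun n => sigmaNorm μ σ (fun ω => Y n ω - Z ω))
        Filter.atTop (nhds 0) := by
  have hεk : ∀ k : ℕ, (2 : ℝ)⁻¹ ^ k ∈ Set.Ioc (0 : ℝ) 1 := fun k =>
    ⟨by positivity, pow_le_one₀ (by norm_num) (by norm_num)⟩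
  have hGpos : ∀ k : ℕ, (0 : ℝ≥0∞) < ENNReal.ofReal ((2 : ℝ)⁻¹ ^ k) *
      ∫⁻ u in Set.Ioo (1 - (2 : ℝ)⁻¹ ^ k) 1, ENNReal.ofReal (σ u) := fun k =>
    ENNReal.mul_pos (ENNReal.ofReal_pos.mpr (hεk k).1).ne'
      (sigma_int_pos hσ0 hσm hσmeas hσ1 (hεk k)).ne'
  choose N hN using fun k => hcauchy _ (hGpos k)
  obtain ⟨n, hn_mono, hnN⟩ : ∃ n : ℕ → ℕ, StrictMono n ∧ ∀ k, N k ≤ n k := by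
    refine ⟨fun k => Nat.rec (N 0) (fun k ih => max (N (k + 1)) (ih + 1)) k,
      strictMono_nat_of_lt_succ fun k => ?_, fun k => ?_⟩
    · exact lt_of_lt_of_le (Nat.lt_succ_self _) (le_max_right _ _)
    · cases k with
      | zero => exact le_rfl
      | succ k => exact le_max_left _ _
  have hEk : ∀ k : ℕ, μ {ω | (2 : ℝ)⁻¹ ^ k < |Y (n (k + 1)) ω - Y (n k) ω|} <
      ENNReal.ofReal ((2 : ℝ)⁻¹ ^ k) := by
    intro k
    apply sigmaNorm_tail_bound hσ0 hσmeas ((hYm _).sub (hYm _)) (hεk k).1 (hεk k)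
    exact hN k (n (k + 1)) (le_trans (hnN k) (hn_mono (Nat.lt_succ_self k)).le)
      (n k) (hnN k)
  have hsum : (∑' k, μ {ω | (2 : ℝ)⁻¹ ^ k < |Y (n (k + 1)) ω - Y (n k) ω|}) ≠ ⊤ := by
    have hb : (∑' k : ℕ, (2⁻¹ : ℝ≥0∞) ^ k) ≠ ⊤ := by
      rw [ENNReal.tsum_geometric, ENNReal.one_sub_inv_two]
      simp
    refine ne_top_of_le_ne_top hb (le_trans (ENNReal.tsum_le_tsum fun k => (hEk k).le)
      (le_of_eq ?_))
    apply tsum_congr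
    intro k
    rw [ENNReal.ofReal_pow (by norm_num : (0 : ℝ) ≤ 2⁻¹)]
    congr 1
    rw [ENNReal.ofReal_inv_of_pos (by norm_num : (0 : ℝ) < 2), ENNReal.ofReal_ofNat]
  have hae : ∀ᵐ ω ∂μ, ∃ l : ℝ, Filter.Tendsto (fun k => Y (n k) ω) Filter.atTop (𝓝 l) := by
    filter_upwards [MeasureTheory.ae_eventually_notMem hsum] with ω hω
    obtain ⟨K, hK⟩ := Filter.eventually_atTop.mp hω
    have hdist : ∀ j : ℕ, dist (Y (n (j + K)) ω) (Y (n (j + 1 + K)) ω) ≤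
        (2 : ℝ)⁻¹ ^ K * (2 : ℝ)⁻¹ ^ j := by
      intro j
      have h1 := hK (j + K) (by omega)
      simp only [Set.mem_setOf_eq, not_lt] at h1
      rw [Real.dist_eq]
      have hidx : j + 1 + K = j + K + 1 := by omega
      calc |Y (n (j + K)) ω - Y (n (j + 1 + K)) ω|
          = |Y (n (j + K + 1)) ω - Y (n (j + K)) ω| := by
            rw [hidx, abs_sub_comm]
        _ ≤ (2 : ℝ)⁻¹ ^ (j + K) := h1
        _ = (2 : ℝ)⁻¹ ^ K * (2 : ℝ)⁻¹ ^ j := by rw [pow_add]; ring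
    have hcs : CauchySeq fun j => Y (n (j + K)) ω :=
      cauchySeq_of_le_geometric 2⁻¹ ((2 : ℝ)⁻¹ ^ K) (by norm_num) hdist
    obtain ⟨l, hl⟩ := cauchySeq_tendsto_of_complete hcs
    exact ⟨l, (Filter.tendsto_add_atTop_iff_nat K).mp hl⟩
  obtain ⟨Z, hZm, hZtend⟩ := measurable_limit_of_tendsto_metrizable_ae
    (fun k => (hYm (n k)).aemeasurable) hae
  have hkey : ∀ ε : ℝ≥0∞, 0 < ε → ∃ M : ℕ, ∀ m ≥ M,
      sigmaNorm μ σ (fun ω => Y m ω - Z ω) ≤ ε := by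
    intro ε hε
    obtain ⟨M, hM⟩ := hcauchy ε hε
    refine ⟨M, fun m hm => ?_⟩
    have hfat : sigmaNorm μ σ (fun ω => Y m ω - Z ω) ≤
        Filter.liminf (fun k => sigmaNorm μ σ (fun ω => Y m ω - Y (n k) ω))
          Filter.atTop := by
      apply sigmaNorm_fatou hσ0 hσmeas ((hYm m).sub hZm)
        (fun k => (hYm m).sub (hYm (n k)))
      filter_upwards [hZtend] with ω hω
      exact tendsto_const_nhds.sub hω
    refine le_trans hfat (Filter.liminf_le_of_frequently_le' (Filter.Eventually.frequently ?_))
    filter_upwards [Filter.eventually_ge_atTop M] with k hk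
    exact (hM m hm (n k) (le_trans hk hn_mono.le_apply)).le
  refine ⟨Z, hZm, ?_, ?_⟩
  · obtain ⟨M, hM⟩ := hkey 1 one_pos
    have h1 : sigmaNorm μ σ (fun ω => Y M ω - Z ω) ≤ 1 := hM M le_rfl
    have heq : sigmaNorm μ σ Z = sigmaNorm μ σ (fun ω => Y M ω + (Z ω - Y M ω)) := by
      apply sigmaNorm_congr_abs
      intro ω
      congr 1
      ring
    rw [heq]
    refine lt_of_le_of_lt
      (sigmaNorm_add_le hσ0 hσm hσmeas (hYm M) (hZm.sub (hYm M))) ?_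
    have h2 : sigmaNorm μ σ (fun ω => Z ω - Y M ω) =
        sigmaNorm μ σ (fun ω => Y M ω - Z ω) :=
      sigmaNorm_congr_abs (fun ω => abs_sub_comm _ _) σ
    rw [h2]
    exact ENNReal.mul_lt_top (by norm_num)
      (ENNReal.add_lt_top.mpr ⟨hYfin M, lt_of_le_of_lt h1 (by norm_num)⟩)
  · rw [ENNReal.tendsto_atTop_zero]
    intro ε hε
    exact hkey ε hε
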